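/- The matrix pencil for the first-order system A(U)∂₁U + B(U)∂₂U = C(U), with A(U) = [[1,0,1/(ρu₁)],[0,1,0],[1/(ρu₁),0,1/(ρ²c²)]] and B(U) = [[0,0,−u₂/u₁],[0,0,1],[−u₂/u₁,1,0]], has generalized eigenvalues (roots λ of det(B − λA) = 0) given exactly by λ₀ = 0 and λ_{1,2} = (ρ u₁ c²/(u₁² − c²)) · ( u₂/u₁ ∓ √(u₁² + u₂² − c²)/c ), provided u₁ > 0, ρ > 0, u₁² ≠ c², and u₁² + u₂² > c². -/

import Mathlib

/-- The generalized eigenvalues of the pencil det(B − λA) = 0 for the Lagrangian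
rotating Euler system are exactly λ₀ = 0 and
λ_{1,2} = (ρu₁c²/(u₁²−c²))(u₂/u₁ ∓ √(u₁²+u₂²−c²)/c). -/
theorem generalized_eigenvalues_pencil
    (ρ c u₁ u₂ : ℝ) (hρ : 0 < ρ) (hc : 0 < c) (hu₁ : 0 < u₁)
    (hne : u₁ ^ 2 ≠ c ^ 2) (hsup : c ^ 2 < u₁ ^ 2 + u₂ ^ 2) :
    ∀ lam : ℝ,
      Matrix.det
        (!![(0 : ℝ), 0, -u₂ / u₁; 0, 0, 1; -u₂ / u₁, 1, 0]
          - lam • !![(1 : ℝ), 0, 1 / (ρ * u₁); 0, 1, 0;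
              1 / (ρ * u₁), 0, 1 / (ρ ^ 2 * c ^ 2)]) = 0 ↔
      (lam = 0 ∨
        lam = ρ * u₁ * c ^ 2 / (u₁ ^ 2 - c ^ 2)
          * (u₂ / u₁ - Real.sqrt (u₁ ^ 2 + u₂ ^ 2 - c ^ 2) / c) ∨
        lam = ρ * u₁ * c ^ 2 / (u₁ ^ 2 - c ^ 2)
          * (u₂ / u₁ + Real.sqrt (u₁ ^ 2 + u₂ ^ 2 - c ^ 2) / c)) := by
  intro lam
  have hρ0 : ρ ≠ 0 := ne_of_gt hρ
  have hc0 : c ≠ 0 := ne_of_gt hc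
  have hu0 : u₁ ≠ 0 := ne_of_gt hu₁
  have hdne : u₁ ^ 2 - c ^ 2 ≠ 0 := sub_ne_zero.mpr hne
  set s : ℝ := Real.sqrt (u₁ ^ 2 + u₂ ^ 2 - c ^ 2) with hs_def
  have hs : s ^ 2 = u₁ ^ 2 + u₂ ^ 2 - c ^ 2 := by
    rw [hs_def, Real.sq_sqrt (by linarith)]
  set M : ℝ := ρ * u₁ * c ^ 2 / (u₁ ^ 2 - c ^ 2) with hM_def
  set K : ℝ := (c ^ 2 - u₁ ^ 2) / (ρ ^ 2 * u₁ ^ 2 * c ^ 2) with hK_def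
  have hK : K ≠ 0 := by
    rw [hK_def]
    exact div_ne_zero (fun h => hdne (by linarith [sub_eq_zero.mpr h])) (by positivity)
  set L1 : ℝ := M * (u₂ / u₁ - s / c) with hL1_def
  set L2 : ℝ := M * (u₂ / u₁ + s / c) with hL2_def
  have hfac : (lam - L1) * (lam - L2)
      = (lam - M * (u₂ / u₁)) ^ 2 - M ^ 2 * (u₁ ^ 2 + u₂ ^ 2 - c ^ 2) / c ^ 2 := by
    rw [hL1_def, hL2_def, ← hs]; ring
  have hdet : Matrix.det
        (!![(0 : ℝ), 0, -u₂ / u₁; 0, 0, 1; -u₂ / u₁, 1, 0]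
          - lam • !![(1 : ℝ), 0, 1 / (ρ * u₁); 0, 1, 0;
              1 / (ρ * u₁), 0, 1 / (ρ ^ 2 * c ^ 2)])
      = K * (lam * ((lam - L1) * (lam - L2))) := by
    rw [hfac]
    simp only [Matrix.det_fin_three, Matrix.sub_apply, Matrix.smul_apply,
      Matrix.cons_val', Matrix.cons_val_zero, Matrix.cons_val_one, Matrix.head_cons,
      Matrix.empty_val', Matrix.cons_val_fin_one, Matrix.head_fin_const,
      Matrix.cons_val_two, Matrix.tail_cons, smul_eq_mul, Matrix.of_apply]
    rw [hK_def, hM_def]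
    field_simp
    ring
  rw [hdet, mul_eq_zero, mul_eq_zero, mul_eq_zero]
  constructor
  · rintro (h | h | h | h)
    · exact absurd h hK
    · exact Or.inl h
    · exact Or.inr (Or.inl (by linarith [sub_eq_zero.mp h]))
    · exact Or.inr (Or.inr (by linarith [sub_eq_zero.mp h]))
  · rintro (h | h | h)
    · exact Or.inr (Or.inl h)
    · exact Or.inr (Or.inr (Or.inl (sub_eq_zero.mpr h)))
    · exact Or.inr (Or.inr (Or.inr (sub_eq_zero.mpr h)))
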